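/- arXiv:1708.00433 — 2 statements merged into one kernel-verified Lean document; each statement's English description precedes it below -/
import Mathlib

section
/- Impossibility of biased coin flipping from scratch (combined bound): if for some ε ≥ 0 there exist systems satisfying the three security conditions d(Π_A Π_B, CF) ≤ ε, d(Π_B, σ_A CF^p_A) ≤ ε, and d(Π_A, CF^p_B σ_B) ≤ ε with respect to a pseudo-metric d that is non-increasing under composition with converters, then d(CF^p_B σ_B σ_A CF^p_A, CF) ≤ 3ε. Combined with the fact that any simulator strategy yields distinguishing advantage at least (1−p)/2 between CF^p_B σ CF^p_A and CF, this gives ε ≥ (1−p)/6. -/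
/-- Impossibility of biased coin flipping from scratch (combined bound).
Resources and converters live in a common monoid `X` (composition written
multiplicatively); `d` is a pseudo-metric that is non-increasing under
composition with converters on either side. If the three security conditions
hold with error `ε`, then `d(CF^p_B σ_B σ_A CF^p_A, CF) ≤ 3ε`; combined with
the lower bound `(1-p)/2` on the distinguishing advantage of any simulated
system from `CF`, this forces `ε ≥ (1-p)/6`. -/
theorem coinflip_impossibility {X : Type*} [Monoid X]
    (d : X → X → ℝ)
    (hrefl : ∀ R : X, d R R = 0)
    (hsymm : ∀ R S : X, d R S = d S R)
    (htri : ∀ R S T : X, d R T ≤ d R S + d S T)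
    (hleft : ∀ α R S : X, d (α * R) (α * S) ≤ d R S)
    (hright : ∀ α R S : X, d (R * α) (S * α) ≤ d R S)
    (p ε : ℝ) (hp : p ∈ Set.Icc (0 : ℝ) 1) (hε : 0 ≤ ε)
    (CF CFpA CFpB PiA PiB σA σB : X)
    (h0 : d (PiA * PiB) CF ≤ ε)
    (hA : d PiB (σA * CFpA) ≤ ε)
    (hB : d PiA (CFpB * σB) ≤ ε)
    (hlb : ∀ τA τB : X, (1 - p) / 2 ≤ d (CFpB * τB * (τA * CFpA)) CF) :
    d (CFpB * σB * (σA * CFpA)) CF ≤ 3 * ε ∧ (1 - p) / 6 ≤ ε := by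
  have h1 : d (CFpB * σB * (σA * CFpA)) (PiA * (σA * CFpA)) ≤ ε := by
    calc d (CFpB * σB * (σA * CFpA)) (PiA * (σA * CFpA)) ≤ d (CFpB * σB) PiA :=
          hright _ _ _
      _ = d PiA (CFpB * σB) := hsymm _ _
      _ ≤ ε := hB
  have h2 : d (PiA * (σA * CFpA)) (PiA * PiB) ≤ ε := by
    calc d (PiA * (σA * CFpA)) (PiA * PiB) ≤ d (σA * CFpA) PiB := hleft _ _ _
      _ = d PiB (σA * CFpA) := hsymm _ _
      _ ≤ ε := hA
  have hmain : d (CFpB * σB * (σA * CFpA)) CF ≤ 3 * ε := by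
    calc d (CFpB * σB * (σA * CFpA)) CF
        ≤ d (CFpB * σB * (σA * CFpA)) (PiA * (σA * CFpA)) +
            d (PiA * (σA * CFpA)) CF := htri _ _ _
      _ ≤ d (CFpB * σB * (σA * CFpA)) (PiA * (σA * CFpA)) +
            (d (PiA * (σA * CFpA)) (PiA * PiB) + d (PiA * PiB) CF) := by
          linarith [htri (PiA * (σA * CFpA)) (PiA * PiB) CF]
      _ ≤ 3 * ε := by linarith
  refine ⟨hmain, ?_⟩
  have := hlb σA σB
  linarith
end

section
/- Construction of 1/2-biased coin flipping from unfair coin flipping (probabilistic core): let c' be a uniform bit held by the ideal 1/2-biased resource, and define the simulator output rule b' = c' if the adversary sends 'continue' and b' = 1 − c' if the adversary sends 'abort'; let the resource output c' with probability 1/2 and b' with probability 1/2. Then on 'continue' the honest output equals c' with probability 1, and on 'abort' the honest output is uniform and independent of c'. This matches exactly the real system in which an abort causes the honest party to output a fresh uniform bit, so the real and ideal output distributions are identical. -/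
/-- Probability that in the *real* system (honest party outputs the shared
uniform bit `c` on 'continue' and a fresh uniform bit `cu` on 'abort', where
the abort decision `f c` depends on the adversary's view `c`) the adversary's
view is `v` and the honest output is `o`. -/
noncomputable def realJoint (f : Bool → Bool) (v o : Bool) : ℝ :=
  ∑ c : Bool, ∑ cu : Bool,
    (1 / 4) * (if c = v then 1 else 0) *
      (if (if f c then cu else c) = o then 1 else 0)

/-- Probability that in the *ideal* system (1/2-biased coin flip with the
simulator rule `b' = c'` on 'continue' and `b' = ¬c'` on 'abort'; the resource
outputs `b'` if the biasing coin `k` comes up and `c'` otherwise, each with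
probability 1/2) the adversary's view is `v` and the honest output is `o`. -/
noncomputable def idealJoint (f : Bool → Bool) (v o : Bool) : ℝ :=
  ∑ c' : Bool, ∑ k : Bool,
    (1 / 4) * (if c' = v then 1 else 0) *
      (if (if k then (if f c' then !c' else c') else c') = o then 1 else 0)

/-- The simulator for constructing a 1/2-biased coin flip from an unfair coin
flip is perfect: on 'continue' the ideal honest output equals `c'` with
probability 1; on 'abort' it is uniform (and independent of `c'`); and for
every abort/continue decision rule `f` the joint distribution of (adversary's
view, honest output) is identical in the real and ideal systems. -/
theorem unfair_to_biased_simulation :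
    (∀ (f : Bool → Bool) (c' : Bool), f c' = false →
      (∑ k : Bool, (1 / 2 : ℝ) *
        (if (if k then (if f c' then !c' else c') else c') = c' then 1 else 0))
        = 1) ∧
    (∀ (f : Bool → Bool) (c' : Bool), f c' = true → ∀ o : Bool,
      (∑ k : Bool, (1 / 2 : ℝ) *
        (if (if k then (if f c' then !c' else c') else c') = o then 1 else 0))
        = 1 / 2) ∧
    (∀ (f : Bool → Bool) (v o : Bool), realJoint f v o = idealJoint f v o) := by
  refine ⟨?_, ?_, ?_⟩
  · intro f c' h
    simp [Fintype.sum_bool, h]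
  · intro f c' h o
    rcases o with _ | _ <;> rcases c' with _ | _ <;>
      simp [Fintype.sum_bool, h]
  · intro f v o
    unfold realJoint idealJoint
    rcases hft : f true with _ | _ <;> rcases hff : f false with _ | _ <;>
      rcases v with _ | _ <;> rcases o with _ | _ <;>
      simp [Fintype.sum_bool, hft, hff]
end
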